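/- Let g : (-δ, 0) → ℝ be continuous with g(τ) = G + O(τ²) as τ → 0⁻ for some constant G, and suppose π solves π'' - (2/τ)·π' + q²·π = g(τ) on (-δ, 0) with q > 0 and π bounded near 0. Then π converges to a finite limit as τ → 0⁻. -/

import Mathlib

open Filter MeasureTheory

set_option maxHeartbeats 1000000

/-- a solution of π'' - (2/τ)π' + q²π = g with g = G + O(τ²) as τ → 0⁻,
bounded near 0, converges to a finite limit as τ → 0⁻. -/
theorem stmt8 (q G δ : ℝ) (hq : 0 < q) (hδ : 0 < δ) (g p p' p'' : ℝ → ℝ)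
    (hg : ContinuousOn g (Set.Ioo (-δ) 0))
    (hgG : ∃ C, ∀ τ ∈ Set.Ioo (-δ) 0, |g τ - G| ≤ C * τ ^ 2)
    (hp : ∀ τ ∈ Set.Ioo (-δ) 0, HasDerivAt p (p' τ) τ)
    (hp' : ∀ τ ∈ Set.Ioo (-δ) 0, HasDerivAt p' (p'' τ) τ)
    (hODE : ∀ τ ∈ Set.Ioo (-δ) 0, p'' τ - (2 / τ) * p' τ + q ^ 2 * p τ = g τ)
    (hbdd : ∃ δ' M, 0 < δ' ∧ ∀ τ ∈ Set.Ioo (-δ') 0, |p τ| ≤ M) :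
    ∃ L, Tendsto p (nhdsWithin 0 (Set.Iio 0)) (nhds L) := by
  obtain ⟨C, hC⟩ := hgG
  obtain ⟨τ₀, hτ₀def⟩ : ∃ τ₀ : ℝ, τ₀ = -(min δ 1) / 2 := ⟨_, rfl⟩
  have hmin : 0 < min δ 1 := lt_min hδ one_pos
  have hτ₀neg : τ₀ < 0 := by rw [hτ₀def]; linarith
  have hτ₀gt : -δ < τ₀ := by
    have : min δ 1 ≤ δ := min_le_left _ _
    rw [hτ₀def]; linarith
  have hτ₀mem : τ₀ ∈ Set.Ioo (-δ) 0 := ⟨hτ₀gt, hτ₀neg⟩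
  have hsub : Set.Ico τ₀ 0 ⊆ Set.Ioo (-δ) 0 := fun x hx => ⟨lt_of_lt_of_le hτ₀gt hx.1, hx.2⟩
  -- bound on g
  obtain ⟨A, hAdef⟩ : ∃ A : ℝ, A = |G| + |C| * δ ^ 2 := ⟨_, rfl⟩
  have hA0 : 0 ≤ A := by rw [hAdef]; positivity
  have hgbd : ∀ τ ∈ Set.Ioo (-δ) 0, |g τ| ≤ A := by
    intro τ hτ
    have h1 := hC τ hτ
    have h2 : τ ^ 2 ≤ δ ^ 2 := by
      have := hτ.1; have := hτ.2; nlinarith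
    have h3 : C * τ ^ 2 ≤ |C| * δ ^ 2 := by
      calc C * τ ^ 2 ≤ |C| * τ ^ 2 := by nlinarith [le_abs_self C, sq_nonneg τ]
        _ ≤ |C| * δ ^ 2 := by nlinarith [abs_nonneg C]
    calc |g τ| = |G + (g τ - G)| := by ring_nf
      _ ≤ |G| + |g τ - G| := abs_add_le _ _
      _ ≤ |G| + |C| * δ ^ 2 := by linarith
      _ = A := hAdef.symm
  obtain ⟨B, hBdef⟩ : ∃ B : ℝ, B = A + 1 := ⟨_, rfl⟩
  have hB0 : 0 < B := by rw [hBdef]; linarith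
  -- energy function and Gronwall weight
  obtain ⟨E, hEdef⟩ : ∃ E : ℝ → ℝ, ∀ τ, E τ = (p' τ) ^ 2 + q ^ 2 * (p τ) ^ 2 :=
    ⟨fun τ => (p' τ) ^ 2 + q ^ 2 * (p τ) ^ 2, fun _ => rfl⟩
  obtain ⟨Φ, hΦdef⟩ : ∃ Φ : ℝ → ℝ, ∀ τ, Φ τ = (E τ + 1) * Real.exp (-(B * τ)) :=
    ⟨fun τ => (E τ + 1) * Real.exp (-(B * τ)), fun _ => rfl⟩
  have hEub : ∀ τ, (p' τ) ^ 2 ≤ E τ := by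
    intro τ; rw [hEdef]; nlinarith [sq_nonneg (q * p τ)]
  have hE0 : ∀ τ, 0 ≤ E τ := by
    intro τ; rw [hEdef]; positivity
  have hEderiv : ∀ τ ∈ Set.Ioo (-δ) 0,
      HasDerivAt E (2 * p' τ * p'' τ + q ^ 2 * (2 * p τ * p' τ)) τ := by
    intro τ hτ
    have h1 : HasDerivAt (fun x => (p' x) ^ 2) (2 * p' τ * p'' τ) τ := by
      simpa using ((hp' τ hτ).fun_pow 2)
    have h2 : HasDerivAt (fun x => q ^ 2 * (p x) ^ 2) (q ^ 2 * (2 * p τ * p' τ)) τ := by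
      simpa using (((hp τ hτ).fun_pow 2).const_mul (q ^ 2))
    have := h1.fun_add h2
    apply this.congr_of_eventuallyEq
    filter_upwards with x
    rw [hEdef]
  have hexp : ∀ τ : ℝ, HasDerivAt (fun x => Real.exp (-(B * x))) (Real.exp (-(B * τ)) * (-B)) τ := by
    intro τ
    have h : HasDerivAt (fun x : ℝ => -(B * x)) (-B) τ := by
      simpa using ((hasDerivAt_id τ).const_mul B).fun_neg
    simpa using h.exp
  have hΦderiv : ∀ τ ∈ Set.Ioo (-δ) 0,
      HasDerivAt Φ ((2 * p' τ * p'' τ + q ^ 2 * (2 * p τ * p' τ)) * Real.exp (-(B * τ))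
        + (E τ + 1) * (Real.exp (-(B * τ)) * (-B))) τ := by
    intro τ hτ
    have := ((hEderiv τ hτ).add_const 1).fun_mul (hexp τ)
    apply this.congr_of_eventuallyEq
    filter_upwards with x
    rw [hΦdef]
  -- the derivative of Φ is nonpositive
  have hΦnonpos : ∀ τ ∈ Set.Ioo (-δ) 0, deriv Φ τ ≤ 0 := by
    intro τ hτ
    rw [(hΦderiv τ hτ).deriv]
    have hτneg : τ < 0 := hτ.2
    have hode := hODE τ hτ
    have hgb := hgbd τ hτ
    have hep : 0 < Real.exp (-(B * τ)) := Real.exp_pos _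
    -- key inequality : E' ≤ B * (E + 1)
    have key : 2 * p' τ * p'' τ + q ^ 2 * (2 * p τ * p' τ) ≤ B * (E τ + 1) := by
      have hpp : p'' τ = (2 / τ) * p' τ + g τ - q ^ 2 * p τ := by linarith
      have hE' : 2 * p' τ * p'' τ + q ^ 2 * (2 * p τ * p' τ)
          = (4 / τ) * (p' τ) ^ 2 + 2 * p' τ * g τ := by
        rw [hpp]; ring
      rw [hE']
      have h1 : (4 / τ) * (p' τ) ^ 2 ≤ 0 := by
        apply mul_nonpos_of_nonpos_of_nonneg
        · apply div_nonpos_of_nonneg_of_nonpos <;> linarith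
        · positivity
      have h2 : 2 * p' τ * g τ ≤ (1 + (p' τ) ^ 2) * A := by
        have hab : 2 * p' τ * g τ ≤ 2 * |p' τ| * |g τ| := by
          calc 2 * p' τ * g τ ≤ |2 * p' τ * g τ| := le_abs_self _
            _ = 2 * |p' τ| * |g τ| := by rw [abs_mul, abs_mul]; norm_num
        have h2' : 2 * |p' τ| * |g τ| ≤ 2 * |p' τ| * A := by
          nlinarith [abs_nonneg (p' τ)]
        have h3' : 2 * |p' τ| * A ≤ (1 + (p' τ) ^ 2) * A := by
          nlinarith [sq_nonneg (|p' τ| - 1), sq_abs (p' τ)]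
        linarith
      have h4 : (1 + (p' τ) ^ 2) * A ≤ B * (E τ + 1) := by
        have hE1 : (p' τ) ^ 2 ≤ E τ := hEub τ
        have hE2 : 0 ≤ E τ := hE0 τ
        nlinarith
      linarith
    have heq : (2 * p' τ * p'' τ + q ^ 2 * (2 * p τ * p' τ)) * Real.exp (-(B * τ))
        + (E τ + 1) * (Real.exp (-(B * τ)) * (-B))
        = ((2 * p' τ * p'' τ + q ^ 2 * (2 * p τ * p' τ)) - B * (E τ + 1)) * Real.exp (-(B * τ)) := by
      ring
    rw [heq]
    apply mul_nonpos_of_nonpos_of_nonneg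
    · linarith
    · positivity
  -- Φ is antitone on Ico τ₀ 0
  have hΦanti : AntitoneOn Φ (Set.Ico τ₀ 0) := by
    apply antitoneOn_of_deriv_nonpos (convex_Ico τ₀ 0)
    · intro x hx
      exact ((hΦderiv x (hsub hx)).continuousAt).continuousWithinAt
    · intro x hx
      rw [interior_Ico] at hx
      exact ((hΦderiv x (hsub (Set.Ioo_subset_Ico_self hx))).differentiableAt).differentiableWithinAt
    · intro x hx
      rw [interior_Ico] at hx
      exact hΦnonpos x (hsub (Set.Ioo_subset_Ico_self hx))
  -- bound on p' on Ico τ₀ 0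
  obtain ⟨M', hM'def⟩ : ∃ M' : ℝ, M' = Φ τ₀ + 1 := ⟨_, rfl⟩
  have hp'bd : ∀ τ ∈ Set.Ico τ₀ 0, |p' τ| ≤ M' := by
    intro τ hτ
    have h1 : Φ τ ≤ Φ τ₀ := hΦanti (Set.left_mem_Ico.2 hτ₀neg) hτ hτ.1
    have hexp1 : 1 ≤ Real.exp (-(B * τ)) := by
      apply Real.one_le_exp; nlinarith [hτ.2]
    have hE2 : 0 ≤ E τ := hE0 τ
    have hE1 : (p' τ) ^ 2 ≤ E τ := hEub τ
    have h2 : E τ + 1 ≤ Φ τ := by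
      rw [hΦdef]
      calc E τ + 1 = (E τ + 1) * 1 := by ring
        _ ≤ (E τ + 1) * Real.exp (-(B * τ)) := by nlinarith
    have h3 : (p' τ) ^ 2 ≤ Φ τ₀ := by linarith
    have h4 : |p' τ| ≤ 1 + (p' τ) ^ 2 := by
      nlinarith [sq_nonneg (|p' τ| - 1), sq_abs (p' τ), abs_nonneg (p' τ)]
    rw [hM'def]; linarith
  -- p' is integrable on Icc τ₀ 0
  have hmeas : IntegrableOn p' (Set.Icc τ₀ 0) := by
    have hIoo : IntegrableOn (deriv p) (Set.Ioo τ₀ 0) := by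
      apply Measure.integrableOn_of_bounded (M := M')
      · exact (measure_Ioo_lt_top).ne
      · exact (measurable_deriv p).aestronglyMeasurable
      · filter_upwards [ae_restrict_mem measurableSet_Ioo] with x hx
        have hx' : x ∈ Set.Ioo (-δ) 0 := hsub (Set.Ioo_subset_Ico_self hx)
        rw [Real.norm_eq_abs, (hp x hx').deriv]
        exact hp'bd x (Set.Ioo_subset_Ico_self hx)
    have hIoo' : IntegrableOn p' (Set.Ioo τ₀ 0) := by
      apply hIoo.congr_fun _ measurableSet_Ioo
      intro x hx
      exact ((hp x (hsub (Set.Ioo_subset_Ico_self hx))).deriv)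
    rwa [integrableOn_Icc_iff_integrableOn_Ioo]
  have hmeasI : IntegrableOn p' (Set.uIcc τ₀ 0) := by
    rwa [Set.uIcc_of_le hτ₀neg.le]
  -- the primitive
  obtain ⟨F, hFdef⟩ : ∃ F : ℝ → ℝ, F = fun x => ∫ t in τ₀..x, p' t := ⟨_, rfl⟩
  have hFcont : ContinuousOn F (Set.Icc τ₀ 0) := by
    rw [hFdef, ← Set.uIcc_of_le hτ₀neg.le]
    exact intervalIntegral.continuousOn_primitive_interval hmeasI
  -- FTC : p τ = p τ₀ + F τ on Ioo τ₀ 0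
  have hFTC : ∀ τ ∈ Set.Ioo τ₀ 0, p τ = p τ₀ + F τ := by
    intro τ hτ
    have hInt : IntervalIntegrable p' MeasureTheory.volume τ₀ τ := by
      apply MeasureTheory.IntegrableOn.intervalIntegrable
      apply hmeas.mono_set
      rw [Set.uIcc_of_le hτ.1.le]
      exact Set.Icc_subset_Icc le_rfl hτ.2.le
    have heq : ∫ t in τ₀..τ, p' t = p τ - p τ₀ := by
      apply intervalIntegral.integral_eq_sub_of_hasDerivAt
      · intro x hx
        rw [Set.uIcc_of_le hτ.1.le] at hx
        exact hp x (hsub ⟨hx.1, lt_of_le_of_lt hx.2 hτ.2⟩)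
      · exact hInt
    rw [hFdef]; simp only; linarith
  refine ⟨p τ₀ + F 0, ?_⟩
  have hnhds : nhdsWithin (0:ℝ) (Set.Iio 0) = nhdsWithin 0 (Set.Ioo τ₀ 0) := by
    rw [← Set.Ioi_inter_Iio]
    rw [nhdsWithin_inter_of_mem]
    exact mem_nhdsWithin_of_mem_nhds (Ioi_mem_nhds hτ₀neg)
  rw [hnhds]
  have hFt : Tendsto F (nhdsWithin 0 (Set.Ioo τ₀ 0)) (nhds (F 0)) := by
    have h0 : (0:ℝ) ∈ Set.Icc τ₀ 0 := Set.right_mem_Icc.2 hτ₀neg.le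
    have := (hFcont 0 h0).tendsto
    exact this.mono_left (nhdsWithin_mono _ Set.Ioo_subset_Icc_self)
  have h2 : Tendsto (fun τ => p τ₀ + F τ) (nhdsWithin 0 (Set.Ioo τ₀ 0)) (nhds (p τ₀ + F 0)) :=
    tendsto_const_nhds.add hFt
  apply h2.congr'
  filter_upwards [self_mem_nhdsWithin] with x hx
  exact (hFTC x hx).symm
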